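/- None of the frame properties seriality, reflexivity, transitivity, symmetry, and Euclidicity (of both R1 and R2) is definable in the language of formulas built from propositional variables by ¬, ∧, ⊡ and ⊞: for each of these properties P there is no set Γ of such formulas with the feature that a bimodal frame F satisfies P if and only if F ⊨ γ for all γ ∈ Γ. -/

import Mathlib

/-- Formulas built from propositional variables by ¬, ∧, ⊡ (`gbox`) and ⊞ (`pbox`). -/
inductive Form : Type
  | var : ℕ → Form
  | neg : Form → Form
  | conj : Form → Form → Form
  | gbox : Form → Form
  | pbox : Form → Form

/-- A bimodal model: a nonempty set of worlds, two accessibility relations and a valuation. -/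
structure BiModel : Type 1 where
  S : Type
  ne : Nonempty S
  R1 : S → S → Prop
  R2 : S → S → Prop
  V : ℕ → Set S

/-- Truth of a formula at a world. ⊡φ: all R1-successors and R2-successors agree
on φ. ⊞φ: either φ holds at all R1-successors, or ¬φ holds at all R2-successors. -/
def sat (M : BiModel) : M.S → Form → Prop
  | s, .var n => s ∈ M.V n
  | s, .neg φ => ¬ sat M s φ
  | s, .conj φ ψ => sat M s φ ∧ sat M s ψ
  | s, .gbox φ => ∀ t u, M.R1 s t → M.R2 s u → (sat M t φ ↔ sat M u φ)
  | s, .pbox φ => (∀ t, M.R1 s t → sat M t φ) ∨ (∀ u, M.R2 s u → ¬ sat M u φ)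

/-- A bimodal frame: a nonempty set of worlds with two accessibility relations. -/
structure BiFrame : Type 1 where
  S : Type
  ne : Nonempty S
  R1 : S → S → Prop
  R2 : S → S → Prop

/-- The model obtained by equipping a frame with a valuation. -/
def BiFrame.toModel (F : BiFrame) (V : ℕ → Set F.S) : BiModel :=
  ⟨F.S, F.ne, F.R1, F.R2, V⟩

/-- φ is valid on the frame F: true at every world under every valuation. -/
def frameValid (F : BiFrame) (φ : Form) : Prop :=
  ∀ (V : ℕ → Set F.S) (s : F.S), sat (F.toModel V) s φ

/-- Frame properties (of both relations). -/
def SerialF (F : BiFrame) : Prop := (∀ s, ∃ t, F.R1 s t) ∧ (∀ s, ∃ t, F.R2 s t)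
def ReflF (F : BiFrame) : Prop := Reflexive F.R1 ∧ Reflexive F.R2
def TransF (F : BiFrame) : Prop := Transitive F.R1 ∧ Transitive F.R2
def SymmF (F : BiFrame) : Prop := Symmetric F.R1 ∧ Symmetric F.R2
def EuclF (F : BiFrame) : Prop :=
  (∀ x y z : F.S, F.R1 x y → F.R1 x z → F.R1 y z) ∧
  (∀ x y z : F.S, F.R2 x y → F.R2 x z → F.R2 y z)

/-- P is definable by a set of formulas: a frame has P iff it validates all of Γ. -/
def Definable (P : BiFrame → Prop) : Prop :=
  ∃ Γ : Set Form, ∀ F : BiFrame, (P F ↔ ∀ γ ∈ Γ, frameValid F γ)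

/-- None of seriality, reflexivity, transitivity, symmetry and Euclidicity is
definable in the language built from variables by ¬, ∧, ⊡ and ⊞. -/
def F1 : BiFrame := ⟨Unit, ⟨()⟩, fun _ _ => True, fun _ _ => True⟩

def F2 : BiFrame := ⟨Fin 3, ⟨0⟩,
  fun x y => (x = 0 ∧ y = 1) ∨ (x = 1 ∧ y = 2), fun _ _ => False⟩

lemma sat_transfer (V : ℕ → Set F2.S) (s : F2.S) (φ : Form) :
    sat (F2.toModel V) s φ ↔
      sat (F1.toModel (fun n => {_u : Unit | s ∈ V n})) () φ := by
  induction φ with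
  | var n => simp [sat, BiFrame.toModel, F1, F2]; exact Iff.rfl
  | neg φ ih => simp [sat, ih]
  | conj φ ψ ih1 ih2 => simp [sat, ih1, ih2]
  | gbox φ ih =>
      constructor
      · intro _ t u _ _
        rfl
      · intro _ t u _ h2
        exact absurd h2 (by simp [BiFrame.toModel, F2])
  | pbox φ ih =>
      constructor
      · intro _
        by_cases h : sat (F1.toModel (fun n => {_u : Unit | s ∈ V n})) () φ
        · exact Or.inl fun t _ => h
        · exact Or.inr fun u _ => h
      · intro _
        exact Or.inr fun u h2 => absurd h2 (by simp [BiFrame.toModel, F2])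

lemma valid_transfer (φ : Form) (h : frameValid F1 φ) : frameValid F2 φ := by
  intro V s
  exact (sat_transfer V s φ).mpr (h _ ())

lemma not_def (P : BiFrame → Prop) (h1 : P F1) (h2 : ¬ P F2) : ¬ Definable P := by
  rintro ⟨Γ, hΓ⟩
  exact h2 ((hΓ F2).mpr fun γ hγ => valid_transfer γ ((hΓ F1).mp h1 γ hγ))

theorem stmt8 :
    ¬ Definable SerialF ∧ ¬ Definable ReflF ∧ ¬ Definable TransF ∧
    ¬ Definable SymmF ∧ ¬ Definable EuclF := by
  refine ⟨not_def _ ?_ ?_, not_def _ ?_ ?_, not_def _ ?_ ?_, not_def _ ?_ ?_,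
    not_def _ ?_ ?_⟩
  · exact ⟨fun s => ⟨(), trivial⟩, fun s => ⟨(), trivial⟩⟩
  · rintro ⟨h, -⟩
    obtain ⟨t, ht⟩ := h (show F2.S from (2 : Fin 3))
    rcases ht with ⟨h1, -⟩ | ⟨h1, -⟩ <;> exact absurd h1 (by decide)
  · exact ⟨fun _ => trivial, fun _ => trivial⟩
  · rintro ⟨h, -⟩
    have := h (show F2.S from (0 : Fin 3))
    rcases this with ⟨-, h1⟩ | ⟨h1, -⟩ <;> exact absurd h1 (by decide)
  · constructor <;> · intro x y z _ _; trivial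
  · rintro ⟨h, -⟩
    have := @h (show F2.S from (0 : Fin 3)) (show F2.S from (1 : Fin 3)) (show F2.S from (2 : Fin 3))
      (Or.inl ⟨rfl, rfl⟩) (Or.inr ⟨rfl, rfl⟩)
    rcases this with ⟨-, h1⟩ | ⟨h1, -⟩ <;> exact absurd h1 (by decide)
  · constructor <;> · intro x y _; trivial
  · rintro ⟨h, -⟩
    have := @h (show F2.S from (0 : Fin 3)) (show F2.S from (1 : Fin 3)) (Or.inl ⟨rfl, rfl⟩)
    rcases this with ⟨h1, -⟩ | ⟨-, h1⟩ <;> exact absurd h1 (by decide)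
  · constructor <;> · intro x y z _ _; trivial
  · rintro ⟨h, -⟩
    have := h (show F2.S from (0 : Fin 3)) (show F2.S from (1 : Fin 3)) (show F2.S from (1 : Fin 3))
      (Or.inl ⟨rfl, rfl⟩) (Or.inl ⟨rfl, rfl⟩)
    rcases this with ⟨h1, -⟩ | ⟨-, h1⟩ <;> exact absurd h1 (by decide)
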